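/- Let A be a ring and M a finitely generated right A-module. Then the endomorphism ring R = End_A(M) is weakly finite in each of the following three cases: (a) every finite subset of A is contained in a right Noetherian subring of A; (b) A is commutative; (c) A is weakly finite and M is a projective A-module. -/

import Mathlib

noncomputable section

open MulOpposite

universe u v

/-- A ring `R` is weakly (stably) finite if `XY = 1` implies `YX = 1` for square
matrices over `R`. -/
def WeaklyFinite (R : Type*) [Ring R] : Prop :=
  ∀ (n : ℕ) (X Y : Matrix (Fin n) (Fin n) R), X * Y = 1 → Y * X = 1

section Aux

lemma weaklyFinite_of_ringEquiv {R : Type*} {S : Type*} [Ring R] [Ring S]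
    (e : R ≃+* S) (h : WeaklyFinite R) : WeaklyFinite S := by
  intro n X Y hXY
  have h1 : X.map ⇑(e.symm : S →+* R) * Y.map ⇑(e.symm : S →+* R) = 1 := by
    rw [← Matrix.map_mul, hXY]
    exact Matrix.map_one _ (map_zero _) (map_one _)
  have h2 := h n _ _ h1
  have h4 : (Y * X).map ⇑(e.symm : S →+* R) = 1 := by
    rw [Matrix.map_mul]; exact h2
  calc Y * X = ((Y * X).map ⇑(e.symm : S →+* R)).map ⇑(e : R →+* S) := by
        ext i j; rw [Matrix.map_apply, Matrix.map_apply]; simp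
    _ = (1 : Matrix (Fin n) (Fin n) R).map ⇑(e : R →+* S) := by rw [h4]
    _ = 1 := Matrix.map_one _ (map_zero _) (map_one _)

variable {B : Type*} {M : Type*} [Ring B] [AddCommGroup M] [Module B M]

/-- A square matrix over `End B M` induces an endomorphism of `M^n`. -/
def matToEnd {n : ℕ} (X : Matrix (Fin n) (Fin n) (Module.End B M)) :
    Module.End B (Fin n → M) where
  toFun v i := ∑ j, X i j (v j)
  map_add' v w := by
    funext i
    simp [Finset.sum_add_distrib]
  map_smul' c v := by
    funext i
    simp [Finset.smul_sum]

lemma matToEnd_mul {n : ℕ} (X Y : Matrix (Fin n) (Fin n) (Module.End B M)) :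
    matToEnd (X * Y) = matToEnd X * matToEnd Y := by
  refine LinearMap.ext fun v => funext fun i => ?_
  show ∑ j, (X * Y) i j (v j) = ∑ k, X i k (∑ j, Y k j (v j))
  simp only [Matrix.mul_apply, LinearMap.sum_apply, Module.End.mul_apply, map_sum]
  exact Finset.sum_comm

lemma matToEnd_one {n : ℕ} :
    matToEnd (1 : Matrix (Fin n) (Fin n) (Module.End B M)) = 1 := by
  refine LinearMap.ext fun v => funext fun i => ?_
  show ∑ j, (1 : Matrix (Fin n) (Fin n) (Module.End B M)) i j (v j) = v i
  have : ∀ j, (1 : Matrix (Fin n) (Fin n) (Module.End B M)) i j (v j)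
      = if i = j then v j else 0 := by
    intro j
    rw [Matrix.one_apply]
    split <;> simp
  simp [this]

lemma matToEnd_apply_single {n : ℕ} (X : Matrix (Fin n) (Fin n) (Module.End B M))
    (j : Fin n) (m : M) (i : Fin n) :
    matToEnd X (Pi.single j m) i = X i j m := by
  show ∑ k, X i k ((Pi.single j m : Fin n → M) k) = X i j m
  rw [Finset.sum_eq_single j]
  · rw [Pi.single_eq_same]
  · intro k _ hk
    rw [Pi.single_eq_of_ne hk, map_zero]
  · intro h
    exact absurd (Finset.mem_univ j) h

lemma matToEnd_injective {n : ℕ} :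
    Function.Injective (matToEnd (B := B) (M := M) (n := n)) := by
  intro X Y h
  ext i j m
  rw [← matToEnd_apply_single X, h, matToEnd_apply_single]

/-- Reduction from matrices over `End B M` to Dedekind-finiteness of `End B (M^n)`. -/
lemma matrix_red {n : ℕ}
    (H : ∀ f g : Module.End B (Fin n → M), f * g = 1 → g * f = 1)
    (X Y : Matrix (Fin n) (Fin n) (Module.End B M)) (h : X * Y = 1) : Y * X = 1 := by
  have h1 : matToEnd X * matToEnd Y = 1 := by
    rw [← matToEnd_mul, h, matToEnd_one]
  have h2 := H _ _ h1
  apply matToEnd_injective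
  rw [matToEnd_mul, h2, matToEnd_one]

lemma dedekind_of_inj_of_surj
    (h : ∀ f : Module.End B M, Function.Surjective f → Function.Injective f)
    (f g : Module.End B M) (hfg : f * g = 1) : g * f = 1 := by
  have hfg' : ∀ x, f (g x) = x := fun x => by
    rw [← Module.End.mul_apply, hfg, Module.End.one_apply]
  have hsurj : Function.Surjective f := fun x => ⟨g x, hfg' x⟩
  have hinj := h f hsurj
  refine LinearMap.ext fun x => hinj ?_
  rw [Module.End.mul_apply, hfg' (f x), Module.End.one_apply]

/-- Case (b): commutative base ring. -/
lemma core_comm {B : Type*} {M : Type*} [CommRing B] [AddCommGroup M] [Module B M]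
    [Module.Finite B M] (f g : Module.End B M) (hfg : f * g = 1) : g * f = 1 :=
  dedekind_of_inj_of_surj
    (fun f hf => OrzechProperty.injective_of_surjective_endomorphism f hf) f g hfg

/-- Case (a): every finite subset of `B` lies in a left Noetherian subring. -/
lemma core_noeth [Module.Finite B M]
    (hyp : ∀ s : Finset B, ∃ T : Subring B, (↑s : Set B) ⊆ (T : Set B) ∧
      IsNoetherianRing T)
    (f g : Module.End B M) (hfg : f * g = 1) : g * f = 1 := by
  classical
  have hfg' : ∀ x, f (g x) = x := fun x => by
    rw [← Module.End.mul_apply, hfg, Module.End.one_apply]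
  obtain ⟨k, m, hm⟩ := Module.Finite.exists_fin (R := B) (M := M)
  have hmem : ∀ x : M, x ∈ Submodule.span B (Set.range m) := fun x => by
    rw [hm]; exact Submodule.mem_top
  have ha : ∀ j, ∃ c : Fin k → B, ∑ i, c i • m i = f (m j) := fun j =>
    (Submodule.mem_span_range_iff_exists_fun B).mp (hmem _)
  have hb : ∀ j, ∃ c : Fin k → B, ∑ i, c i • m i = g (m j) := fun j =>
    (Submodule.mem_span_range_iff_exists_fun B).mp (hmem _)
  choose a hA using ha
  choose b hB using hb
  set s : Finset B := (Finset.univ.image fun p : Fin k × Fin k => a p.1 p.2) ∪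
    (Finset.univ.image fun p : Fin k × Fin k => b p.1 p.2) with hs
  obtain ⟨T, hsT, hTN⟩ := hyp s
  haveI := hTN
  have haT : ∀ j i, a j i ∈ T := fun j i =>
    hsT (Finset.mem_coe.mpr (Finset.mem_union_left _
      (Finset.mem_image.mpr ⟨(j, i), Finset.mem_univ _, rfl⟩)))
  have hbT : ∀ j i, b j i ∈ T := fun j i =>
    hsT (Finset.mem_coe.mpr (Finset.mem_union_right _
      (Finset.mem_image.mpr ⟨(j, i), Finset.mem_univ _, rfl⟩)))
  set N : Submodule T M := Submodule.span T (Set.range m) with hN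
  have hmN : ∀ j, m j ∈ N := fun j => Submodule.subset_span ⟨j, rfl⟩
  have hstab : ∀ (h : Module.End B M) (c : Fin k → Fin k → B),
      (∀ j i, c j i ∈ T) → (∀ j, ∑ i, c j i • m i = h (m j)) →
      ∀ x ∈ N, h x ∈ N := by
    intro h c hcT hc x hx
    induction hx using Submodule.span_induction with
    | mem x hx =>
      obtain ⟨j, rfl⟩ := hx
      rw [← hc j]
      refine Submodule.sum_mem _ fun i _ => ?_
      have : c j i • m i = (⟨c j i, hcT j i⟩ : T) • m i := rfl
      rw [this]
      exact Submodule.smul_mem _ _ (hmN i)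
    | zero => rw [map_zero]; exact Submodule.zero_mem _
    | add x y _ _ hx hy => rw [map_add]; exact Submodule.add_mem _ hx hy
    | smul t x _ hx =>
      have : t • x = (t : B) • x := rfl
      rw [this, map_smul]
      have h2 : (t : B) • h x = t • h x := rfl
      rw [h2]
      exact Submodule.smul_mem _ _ hx
  have hfN : ∀ x ∈ N, f x ∈ N := hstab f a haT hA
  have hgN : ∀ x ∈ N, g x ∈ N := hstab g b hbT hB
  let fN : N →ₗ[T] N := (f.restrictScalars T).restrict hfN
  let gN : N →ₗ[T] N := (g.restrictScalars T).restrict hgN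
  haveI : IsNoetherian T N :=
    isNoetherian_of_fg_of_noetherian _ (Submodule.fg_span (Set.finite_range m))
  have hcomp : ∀ x : N, fN (gN x) = x := fun x => Subtype.ext (hfg' x)
  have hsurj : Function.Surjective fN := fun x => ⟨gN x, hcomp x⟩
  have hinj := IsNoetherian.injective_of_surjective_endomorphism fN hsurj
  have hgf : ∀ x : N, gN (fN x) = x := fun x => hinj (hcomp (fN x))
  have key : ∀ j, g (f (m j)) = m j := fun j =>
    congrArg Subtype.val (hgf ⟨m j, hmN j⟩)
  refine LinearMap.ext_on hm fun x hx => ?_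
  obtain ⟨j, rfl⟩ := hx
  show (g * f) (m j) = (1 : Module.End B M) (m j)
  rw [Module.End.mul_apply, key j, Module.End.one_apply]

/-- Endomorphisms of a finite free module as matrices over `Bᵐᵒᵖ`. -/
def endToMat {ι : Type*} [Fintype ι] [DecidableEq ι]
    (F : Module.End B (ι → B)) : Matrix ι ι Bᵐᵒᵖ :=
  fun i j => op (F (Pi.single j 1) i)

lemma end_expansion {ι : Type*} [Fintype ι] [DecidableEq ι]
    (F : Module.End B (ι → B)) (v : ι → B) (i : ι) :
    F v i = ∑ j, v j * F (Pi.single j 1) i := by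
  classical
  have hv : v = ∑ j, v j • (Pi.single j 1 : ι → B) := by
    funext i
    rw [Finset.sum_apply]
    simp [Pi.single_apply, mul_ite, mul_one, mul_zero]
  conv_lhs => rw [hv]
  rw [map_sum, Finset.sum_apply]
  simp [Pi.smul_apply, smul_eq_mul]

lemma endToMat_mul {ι : Type*} [Fintype ι] [DecidableEq ι]
    (F G : Module.End B (ι → B)) :
    endToMat (F * G) = endToMat F * endToMat G := by
  ext i k
  show op (F (G (Pi.single k 1)) i) = ∑ j, endToMat F i j * endToMat G j k
  rw [end_expansion F (G (Pi.single k 1)) i]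
  rw [Finset.op_sum]
  refine Finset.sum_congr rfl fun j _ => ?_
  show op (G (Pi.single k 1) j * F (Pi.single j 1) i) = _
  rw [op_mul]
  rfl

lemma endToMat_one {ι : Type*} [Fintype ι] [DecidableEq ι] :
    endToMat (1 : Module.End B (ι → B)) = 1 := by
  ext i j
  show op ((Pi.single j 1 : ι → B) i) = (1 : Matrix ι ι Bᵐᵒᵖ) i j
  rw [Pi.single_apply, Matrix.one_apply]
  by_cases h : i = j <;> simp [h]

lemma endToMat_injective {ι : Type*} [Fintype ι] [DecidableEq ι] :
    Function.Injective (endToMat (B := B) (ι := ι)) := by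
  intro F G h
  refine LinearMap.ext fun v => funext fun i => ?_
  rw [end_expansion F, end_expansion G]
  refine Finset.sum_congr rfl fun j _ => ?_
  have hj : op (F (Pi.single j 1) i) = op (G (Pi.single j 1) i) := congrFun (congrFun h i) j
  rw [op_injective hj]

/-- Dedekind-finiteness of the endomorphism ring of a finite free module,
given weak finiteness of `Bᵐᵒᵖ`. -/
lemma dedekind_free {ι : Type*} [Fintype ι] [DecidableEq ι]
    (hWF : WeaklyFinite Bᵐᵒᵖ)
    (F G : Module.End B (ι → B)) (h : F * G = 1) : G * F = 1 := by
  classical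
  let e : ι ≃ Fin (Fintype.card ι) := Fintype.equivFin ι
  have h1 : (endToMat F).submatrix ⇑e.symm ⇑e.symm *
      (endToMat G).submatrix ⇑e.symm ⇑e.symm = 1 := by
    rw [Matrix.submatrix_mul_equiv, ← endToMat_mul, h, endToMat_one,
      Matrix.submatrix_one_equiv]
  have h2 := hWF _ _ _ h1
  rw [Matrix.submatrix_mul_equiv, ← endToMat_mul] at h2
  have h3 : endToMat (G * F) = endToMat (1 : Module.End B (ι → B)) := by
    rw [endToMat_one]
    have h4 := congrArg (fun Z => Z.submatrix ⇑e ⇑e) h2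
    simp only [Matrix.submatrix_submatrix] at h4
    have h5 : (⇑e.symm ∘ ⇑e) = id := funext fun x => e.symm_apply_apply x
    rw [h5, Matrix.submatrix_id_id, Matrix.submatrix_one_equiv] at h4
    exact h4
  exact endToMat_injective h3

/-- Case (c): `M` a direct summand of a finite free module, `Bᵐᵒᵖ` weakly finite. -/
lemma core_split {ι : Type*} [Fintype ι] [DecidableEq ι]
    (π : (ι → B) →ₗ[B] M) (σ : M →ₗ[B] (ι → B)) (hπσ : ∀ x, π (σ x) = x)
    (hWF : WeaklyFinite Bᵐᵒᵖ)
    (f g : Module.End B M) (hfg : f * g = 1) : g * f = 1 := by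
  have hfg' : ∀ x, f (g x) = x := fun x => by
    rw [← Module.End.mul_apply, hfg, Module.End.one_apply]
  let F : Module.End B (ι → B) := σ ∘ₗ f ∘ₗ π + (1 - σ ∘ₗ π)
  let G : Module.End B (ι → B) := σ ∘ₗ g ∘ₗ π + (1 - σ ∘ₗ π)
  have hFw : ∀ w, F w = σ (f (π w)) + (w - σ (π w)) := fun w => by
    simp [F, LinearMap.add_apply, LinearMap.sub_apply, LinearMap.comp_apply,
      Module.End.one_apply]
  have hGw : ∀ w, G w = σ (g (π w)) + (w - σ (π w)) := fun w => by
    simp [G, LinearMap.add_apply, LinearMap.sub_apply, LinearMap.comp_apply,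
      Module.End.one_apply]
  have hπG : ∀ w, π (G w) = g (π w) := fun w => by
    rw [hGw, map_add, map_sub, hπσ, hπσ]; abel
  have hπF : ∀ w, π (F w) = f (π w) := fun w => by
    rw [hFw, map_add, map_sub, hπσ, hπσ]; abel
  have hFG : F * G = 1 := by
    refine LinearMap.ext fun w => ?_
    rw [Module.End.mul_apply, Module.End.one_apply, hFw, hπG, hfg' (π w), hGw]
    abel
  have hGF := dedekind_free hWF F G hFG
  have hGF' : ∀ w, G (F w) = w := fun w => by
    rw [← Module.End.mul_apply, hGF, Module.End.one_apply]
  refine LinearMap.ext fun x => ?_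
  have h3 : F (σ x) = σ (f x) := by
    rw [hFw, hπσ x]; abel
  have h4 : G (σ (f x)) = σ (g (f x)) := by
    rw [hGw, hπσ (f x)]; abel
  have h5 := hGF' (σ x)
  rw [h3, h4] at h5
  have h6 := congrArg π h5
  rw [hπσ, hπσ] at h6
  rw [Module.End.mul_apply, Module.End.one_apply, h6]

end Aux

/-- **Lemma 2.1.** Let `A` be a ring and `M` a finitely generated right `A`-module.
The endomorphism ring `R = End_A(M)` is weakly finite in each of the following three
cases: (a) every finite subset of `A` is contained in a right Noetherian subring;
(b) `A` is commutative; (c) `A` is weakly finite and `M` is projective. -/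
theorem endomorphism_ring_weakly_finite :
    (∀ (A : Type u) (M : Type v) [Ring A] [AddCommGroup M] [Module Aᵐᵒᵖ M],
      Module.Finite Aᵐᵒᵖ M →
      (∀ s : Finset A, ∃ S : Subring A, (↑s : Set A) ⊆ (S : Set A) ∧
        IsNoetherianRing (↥S)ᵐᵒᵖ) →
      WeaklyFinite (Module.End Aᵐᵒᵖ M)) ∧
    (∀ (A : Type u) (M : Type v) [CommRing A] [AddCommGroup M] [Module Aᵐᵒᵖ M],
      Module.Finite Aᵐᵒᵖ M →
      WeaklyFinite (Module.End Aᵐᵒᵖ M)) ∧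
    (∀ (A : Type u) (M : Type v) [Ring A] [AddCommGroup M] [Module Aᵐᵒᵖ M],
      Module.Finite Aᵐᵒᵖ M → WeaklyFinite A → Module.Projective Aᵐᵒᵖ M →
      WeaklyFinite (Module.End Aᵐᵒᵖ M)) := by
  refine ⟨?_, ?_, ?_⟩
  · -- Case (a)
    intro A M _ _ _ hfin hyp n X Y hXY
    haveI := hfin
    have hyp' : ∀ s : Finset Aᵐᵒᵖ, ∃ T : Subring Aᵐᵒᵖ, (↑s : Set Aᵐᵒᵖ) ⊆ (T : Set Aᵐᵒᵖ) ∧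
        IsNoetherianRing T := by
      classical
      intro s
      obtain ⟨S, hS1, hS2⟩ := hyp (s.image unop)
      refine ⟨S.op, fun x hx => Subring.mem_op.mpr ?_, ?_⟩
      · exact hS1 (Finset.mem_coe.mpr (Finset.mem_image_of_mem unop hx))
      · exact isNoetherianRing_of_ringEquiv _ S.mopRingEquivOp
    exact matrix_red (core_noeth hyp') X Y hXY
  · -- Case (b)
    intro A M _ _ _ hfin n X Y hXY
    haveI := hfin
    exact matrix_red (core_comm (B := Aᵐᵒᵖ)) X Y hXY
  · -- Case (c)
    intro A M _ _ _ hfin hA hproj n X Y hXY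
    haveI := hfin
    haveI := hproj
    classical
    obtain ⟨k, m, hm⟩ := Module.Finite.exists_fin (R := Aᵐᵒᵖ) (M := M)
    let π0 : (Fin k → Aᵐᵒᵖ) →ₗ[Aᵐᵒᵖ] M :=
      { toFun := fun c => ∑ i, c i • m i
        map_add' := fun c d => by simp [add_smul, Finset.sum_add_distrib]
        map_smul' := fun r c => by simp [mul_smul, Finset.smul_sum] }
    have hπ0surj : Function.Surjective π0 := by
      intro x
      have : x ∈ Submodule.span Aᵐᵒᵖ (Set.range m) := by rw [hm]; exact Submodule.mem_top
      obtain ⟨c, hc⟩ := (Submodule.mem_span_range_iff_exists_fun Aᵐᵒᵖ).mp this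
      exact ⟨c, hc⟩
    obtain ⟨σ0, hσ0⟩ := Module.projective_lifting_property π0 LinearMap.id hπ0surj
    have hσ0' : ∀ x, π0 (σ0 x) = x := fun x => by
      have := DFunLike.congr_fun hσ0 x
      simpa using this
    let π : ((Fin n × Fin k) → Aᵐᵒᵖ) →ₗ[Aᵐᵒᵖ] (Fin n → M) :=
      { toFun := fun w i => π0 (fun j => w (i, j))
        map_add' := fun w w' => funext fun i => π0.map_add _ _
        map_smul' := fun r w => funext fun i => π0.map_smul r _ }
    let σ : (Fin n → M) →ₗ[Aᵐᵒᵖ] ((Fin n × Fin k) → Aᵐᵒᵖ) :=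
      { toFun := fun v p => σ0 (v p.1) p.2
        map_add' := fun v w => funext fun p => by
          show σ0 (v p.1 + w p.1) p.2 = _
          rw [map_add]; rfl
        map_smul' := fun r v => funext fun p => by
          show σ0 (r • v p.1) p.2 = _
          rw [map_smul]; rfl }
    have hπσ : ∀ v, π (σ v) = v := by
      intro v
      funext i
      show π0 (fun j => σ0 (v i) j) = v i
      exact hσ0' (v i)
    have hWFop : WeaklyFinite Aᵐᵒᵖᵐᵒᵖ := weaklyFinite_of_ringEquiv (RingEquiv.opOp A) hA
    exact matrix_red (core_split π σ hπσ hWFop) X Y hXY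

end
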